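/- Let m be a finite-dimensional real vector space with complex structure I (I² = −Id) and let R, S : m → m be linear maps with R invertible. Define the real 2n×2n block operator J := [[−R⁻¹S, −R⁻¹],[R + S R⁻¹ S, S R⁻¹]] acting on m ⊕ m, and J⁻ := [[I, 0],[0, −I]]. Then J ∘ J = −Id, and J anticommutes with J⁻ if and only if RI = IR and SI = −IS. -/

import Mathlib

theorem stmt7 {m : Type*} [AddCommGroup m] [Module ℝ m] [FiniteDimensional ℝ m]
    (I R S R' : m →ₗ[ℝ] m)
    (hI2 : ∀ x, I (I x) = -x)
    (hRR' : ∀ x, R (R' x) = x) (hR'R : ∀ x, R' (R x) = x)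
    (J Jm : m × m →ₗ[ℝ] m × m)
    (hJ : ∀ u v : m, J (u, v) = (-R' (S u) - R' v, R u + S (R' (S u)) + S (R' v)))
    (hJm : ∀ u v : m, Jm (u, v) = (I u, -I v)) :
    (∀ p, J (J p) = -p) ∧
    ((∀ p, J (Jm p) = -(Jm (J p))) ↔
      ((∀ x, R (I x) = I (R x)) ∧ (∀ x, S (I x) = -I (S x)))) := by
  constructor
  · rintro ⟨u, v⟩
    rw [hJ, hJ]
    simp only [map_add, map_neg, map_sub, hRR', hR'R, Prod.neg_mk, Prod.mk.injEq]
    constructor <;> abel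
  · constructor
    · intro h
      have key : ∀ v, R' (I v) = I (R' v) ∧ -S (R' (I v)) = I (S (R' v)) := by
        intro v
        have := h (0, v)
        rw [hJm, hJ] at this
        simp only [map_zero, map_neg, neg_zero, zero_sub, zero_add, neg_neg] at this
        rw [hJ, hJm] at this
        simp only [map_neg, map_sub, map_zero, neg_zero, zero_sub, zero_add, neg_neg,
          Prod.neg_mk, Prod.mk.injEq] at this
        exact this
      constructor
      · intro x
        have h1 := (key (R x)).1
        rw [hR'R] at h1
        calc R (I x) = R (R' (I (R x))) := by rw [h1]
        _ = I (R x) := hRR' _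
      · intro x
        have h1 := (key (R x)).1
        have h2 := (key (R x)).2
        rw [hR'R] at h1 h2
        rw [h1] at h2
        rw [← h2, neg_neg]
    · rintro ⟨hRI, hSI⟩ ⟨u, v⟩
      have hR'I : ∀ x, R' (I x) = I (R' x) := by
        intro x
        conv_lhs => rw [← hRR' x, ← hRI, hR'R]
      rw [hJm, hJ, hJ, hJm]
      simp only [map_neg, map_add, map_sub, hSI, hRI, hR'I, neg_neg, Prod.neg_mk,
        Prod.mk.injEq]
      exact ⟨by abel, trivial⟩
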